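/- Let R be a UFD, p ∈ R a prime element, and k ≥ 1 such that R/(p^k) is finite. Then I_r(R/(p^k)) = D((R/(p^k))^×) + (k - 1). -/

import Mathlib

/-- The Davenport constant of a (multiplicative) commutative group: the least `k > 0` such
that every sequence of `k` elements has a nonempty subsequence with product `1`. -/
noncomputable def Davenport (G : Type*) [CommGroup G] : ℕ :=
  sInf {k : ℕ | 0 < k ∧ ∀ f : Fin k → G,
    ∃ T : Finset (Fin k), T.Nonempty ∧ ∏ i ∈ T, f i = 1}

/-- The Erdős–Burgess constant of a commutative monoid: the least `t > 0` such that every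
sequence of `t` elements has a nonempty subsequence whose product is idempotent. -/
noncomputable def ErdosBurgess (M : Type*) [CommMonoid M] : ℕ :=
  sInf {t : ℕ | 0 < t ∧ ∀ f : Fin t → M,
    ∃ T : Finset (Fin t), T.Nonempty ∧ (∏ i ∈ T, f i) * (∏ i ∈ T, f i) = ∏ i ∈ T, f i}



open Finset

/-- Prefix-product pigeonhole: set of Davenport lengths is nonempty. -/
lemma aux_prefix {G : Type*} [CommGroup G] [Fintype G] (n : ℕ) (hn : Fintype.card G ≤ n)
    (f : Fin n → G) : ∃ T : Finset (Fin n), T.Nonempty ∧ ∏ i ∈ T, f i = 1 := by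
  set P : Fin (n + 1) → G := fun j => ∏ i ∈ univ.filter (fun i : Fin n => (i : ℕ) < (j : ℕ)), f i
  suffices h : ∀ a b : Fin (n + 1), (a : ℕ) < (b : ℕ) → P a = P b →
      ∃ T : Finset (Fin n), T.Nonempty ∧ ∏ i ∈ T, f i = 1 by
    obtain ⟨a, b, hab, heq⟩ := Fintype.exists_ne_map_eq_of_card_lt P (by simpa using Nat.lt_succ_of_le hn)
    rcases lt_or_gt_of_ne (fun h' : (a : ℕ) = (b : ℕ) => hab (Fin.ext h')) with h1 | h1
    · exact h a b h1 heq
    · exact h b a h1 heq.symm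
  intro a b hab heq
  refine ⟨univ.filter (fun i : Fin n => (a : ℕ) ≤ (i : ℕ) ∧ (i : ℕ) < (b : ℕ)), ?_, ?_⟩
  · refine ⟨⟨(a : ℕ), by omega⟩, ?_⟩
    simp only [mem_filter, mem_univ, true_and]
    exact ⟨le_refl _, by simpa using hab⟩
  · have hsplit : univ.filter (fun i : Fin n => (i : ℕ) < (b : ℕ)) =
        univ.filter (fun i : Fin n => (i : ℕ) < (a : ℕ)) ∪
        univ.filter (fun i : Fin n => (a : ℕ) ≤ (i : ℕ) ∧ (i : ℕ) < (b : ℕ)) := by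
      ext i; simp only [mem_filter, mem_union, mem_univ, true_and]; omega
    have hdisj : Disjoint (univ.filter (fun i : Fin n => (i : ℕ) < (a : ℕ)))
        (univ.filter (fun i : Fin n => (a : ℕ) ≤ (i : ℕ) ∧ (i : ℕ) < (b : ℕ))) := by
      simp only [disjoint_left, mem_filter, mem_univ, true_and]
      intro i hi hi2; omega
    have : P b = P a * ∏ i ∈ univ.filter
        (fun i : Fin n => (a : ℕ) ≤ (i : ℕ) ∧ (i : ℕ) < (b : ℕ)), f i := by
      rw [show P b = ∏ i ∈ univ.filter (fun i : Fin n => (i : ℕ) < (b : ℕ)), f i from rfl,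
        hsplit, prod_union hdisj]
    rw [← heq] at this
    exact (left_eq_mul.mp this)

lemma aux_idem_pow {M : Type*} [CommMonoid M] {x : M} (h : x * x = x) (n : ℕ) :
    x ^ (n + 1) = x := by
  induction n with
  | zero => simp
  | succ n ih => rw [pow_succ, ih, h]

section Ring
variable {R : Type*} [CommRing R] [IsDomain R] {p : R} {k : ℕ}

lemma aux_unit (hp : Prime p) [Finite (R ⧸ Ideal.span {p ^ k})] {r : R} (hr : ¬ p ∣ r) :
    IsUnit (Ideal.Quotient.mk (Ideal.span {p ^ k}) r) := by
  have hz : ∀ z : R ⧸ Ideal.span {p ^ k}, Ideal.Quotient.mk (Ideal.span {p ^ k}) r * z = 0 → z = 0 := by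
    intro z hz0
    obtain ⟨s, rfl⟩ := Ideal.Quotient.mk_surjective z
    rw [← map_mul, Ideal.Quotient.eq_zero_iff_mem, Ideal.mem_span_singleton] at hz0
    rw [Ideal.Quotient.eq_zero_iff_mem, Ideal.mem_span_singleton]
    exact hp.pow_dvd_of_dvd_mul_left k hr hz0
  have hinj : Function.Injective (fun x : R ⧸ Ideal.span {p ^ k} =>
      Ideal.Quotient.mk (Ideal.span {p ^ k}) r * x) := by
    intro x y hxy
    have h0 : Ideal.Quotient.mk (Ideal.span {p ^ k}) r * (x - y) = 0 := by
      rw [mul_sub]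
      simpa [sub_eq_zero] using hxy
    have := hz _ h0
    rwa [sub_eq_zero] at this
  obtain ⟨b, hb⟩ := (Finite.injective_iff_surjective.mp hinj) 1
  exact IsUnit.of_mul_eq_one b hb

lemma aux_nonunit_dvd (hp : Prime p) [Finite (R ⧸ Ideal.span {p ^ k})] (x : R ⧸ Ideal.span {p ^ k})
    (hx : ¬ IsUnit x) : (Ideal.Quotient.mk (Ideal.span {p ^ k}) p) ∣ x := by
  obtain ⟨r, rfl⟩ := Ideal.Quotient.mk_surjective x
  by_cases hpr : p ∣ r
  · exact map_dvd _ hpr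
  · exact absurd (aux_unit hp hpr) hx

lemma aux_pi_pow_ne (hp : Prime p) {j : ℕ} (hj : j < k) :
    (Ideal.Quotient.mk (Ideal.span {p ^ k}) p) ^ j ≠ 0 := by
  intro h
  rw [← map_pow, Ideal.Quotient.eq_zero_iff_mem, Ideal.mem_span_singleton,
    pow_dvd_pow_iff hp.ne_zero hp.not_unit] at h
  omega

omit [IsDomain R] in
lemma aux_pi_pow_zero :
    (Ideal.Quotient.mk (Ideal.span {p ^ k}) p) ^ k = 0 := by
  rw [← map_pow, Ideal.Quotient.eq_zero_iff_mem]
  exact Ideal.mem_span_singleton_self _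

lemma aux_classify (hp : Prime p) (hk : 0 < k) [Finite (R ⧸ Ideal.span {p ^ k})] (x : R ⧸ Ideal.span {p ^ k}) (hx : x ≠ 0) :
    ∃ (u : (R ⧸ Ideal.span {p ^ k})ˣ) (j : ℕ), j < k ∧
      x = u * (Ideal.Quotient.mk (Ideal.span {p ^ k}) p) ^ j := by
  classical
  obtain ⟨r, rfl⟩ := Ideal.Quotient.mk_surjective x
  have hrk : ¬ p ^ k ∣ r := by
    intro h
    exact hx (by rwa [Ideal.Quotient.eq_zero_iff_mem, Ideal.mem_span_singleton])
  have hex : ∃ n, ¬ p ^ (n + 1) ∣ r := ⟨k - 1, by rwa [Nat.sub_add_cancel hk]⟩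
  obtain ⟨j, hjk, hj2, hj1⟩ : ∃ j, j ≤ k - 1 ∧ p ^ j ∣ r ∧ ¬ p ^ (j + 1) ∣ r := by
    refine ⟨Nat.find hex, Nat.find_min' hex (by rwa [Nat.sub_add_cancel hk]), ?_, Nat.find_spec hex⟩
    rcases Nat.eq_zero_or_pos (Nat.find hex) with h0 | h0
    · simp [h0]
    · have h1 := Nat.find_min hex (Nat.sub_lt h0 one_pos)
      rw [not_not] at h1
      have h2 : Nat.find hex - 1 + 1 = Nat.find hex := Nat.sub_add_cancel h0
      rwa [h2] at h1
  obtain ⟨s, rfl⟩ := hj2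
  have hs : ¬ p ∣ s := by
    rintro ⟨t, rfl⟩
    exact hj1 ⟨t, by ring⟩
  obtain ⟨u, hu⟩ := aux_unit hp (k := k) hs
  exact ⟨u, j, by omega, by rw [map_mul, map_pow, ← hu, mul_comm]⟩

end Ring

theorem stmt17 {R : Type*} [CommRing R] [IsDomain R] [UniqueFactorizationMonoid R]
    (p : R) (hp : Prime p) (k : ℕ) (hk : 0 < k)
    [Finite (R ⧸ Ideal.span {p ^ k})] :
    ErdosBurgess (R ⧸ Ideal.span {p ^ k}) =
      Davenport ((R ⧸ Ideal.span {p ^ k})ˣ) + (k - 1) := by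
  classical
  have : Fintype (R ⧸ Ideal.span {p ^ k}) := Fintype.ofFinite _
  set M := R ⧸ Ideal.span {p ^ k} with hM
  set π : M := Ideal.Quotient.mk (Ideal.span {p ^ k}) p with hπ
  set G := Mˣ with hG
  set D := Davenport G with hD
  set SD : Set ℕ := {n : ℕ | 0 < n ∧ ∀ f : Fin n → G,
    ∃ T : Finset (Fin n), T.Nonempty ∧ ∏ i ∈ T, f i = 1} with hSD
  set SE : Set ℕ := {t : ℕ | 0 < t ∧ ∀ f : Fin t → M,
    ∃ T : Finset (Fin t), T.Nonempty ∧ (∏ i ∈ T, f i) * (∏ i ∈ T, f i) = ∏ i ∈ T, f i} with hSE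
  have hDsInf : D = sInf SD := rfl
  have hEsInf : ErdosBurgess M = sInf SE := rfl
  -- specialized ring facts
  have hπ0 : π ^ k = 0 := by rw [hπ]; exact aux_pi_pow_zero
  have hπne : ∀ j : ℕ, j < k → π ^ j ≠ 0 := by
    intro j hj; rw [hπ]; exact aux_pi_pow_ne hp hj
  have hπdvd : ∀ x : M, ¬ IsUnit x → π ∣ x := by
    intro x hx; rw [hπ]; exact aux_nonunit_dvd hp x hx
  -- SD is nonempty
  have hSDne : SD.Nonempty :=
    ⟨Fintype.card G, Fintype.card_pos, fun f => aux_prefix _ le_rfl f⟩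
  have hDmem : D ∈ SD := hDsInf ▸ Nat.sInf_mem hSDne
  have hDpos : 0 < D := hDmem.1
  -- a "bad" unit sequence of length D - 1
  have hbad : ∃ g : Fin (D - 1) → G, ∀ T : Finset (Fin (D - 1)), T.Nonempty →
      ∏ i ∈ T, g i ≠ 1 := by
    rcases Nat.eq_zero_or_pos (D - 1) with h0 | h0
    · refine ⟨fun _ => 1, fun T hT => ?_⟩
      obtain ⟨i, _⟩ := hT
      exact absurd i.2 (by omega)
    · have hnot : (D - 1) ∉ SD := by
        rw [hDsInf] at hDpos ⊢
        exact Nat.notMem_of_lt_sInf (by omega)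
      rw [hSD] at hnot
      simp only [Set.mem_setOf_eq, not_and, not_forall] at hnot
      obtain ⟨f, hf⟩ := hnot h0
      refine ⟨f, fun T hT hT1 => hf ⟨T, hT, hT1⟩⟩
  obtain ⟨g, hg⟩ := hbad
  -- the "bad" sequence in M of length (D-1) + (k-1)
  set F : Fin ((D - 1) + (k - 1)) → M :=
    fun i => if h : (i : ℕ) < D - 1 then ((g ⟨(i : ℕ), h⟩ : G) : M) else π with hF
  have hFbad : ∀ T : Finset (Fin ((D - 1) + (k - 1))), T.Nonempty →
      (∏ i ∈ T, F i) * (∏ i ∈ T, F i) ≠ ∏ i ∈ T, F i := by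
    intro T hT hidem
    set T₁ := T.filter (fun i : Fin ((D - 1) + (k - 1)) => (i : ℕ) < D - 1) with hT₁
    set T₂ := T.filter (fun i : Fin ((D - 1) + (k - 1)) => ¬ (i : ℕ) < D - 1) with hT₂
    set U : G := ∏ i ∈ T₁.attach, g ⟨(i.1 : ℕ), (Finset.mem_filter.mp i.2).2⟩ with hU
    have hsplit : ∏ i ∈ T, F i = (∏ i ∈ T₁, F i) * (∏ i ∈ T₂, F i) :=
      (Finset.prod_filter_mul_prod_filter_not T (fun i => (i : ℕ) < D - 1) F).symm
    have hUc : (U : M) = ∏ i ∈ T₁.attach,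
        ((g ⟨(i.1 : ℕ), (Finset.mem_filter.mp i.2).2⟩ : G) : M) := by
      rw [hU]; exact map_prod (Units.coeHom M) _ _
    have h1 : ∏ i ∈ T₁, F i = (U : M) := by
      rw [hUc, ← Finset.prod_attach T₁ F]
      refine Finset.prod_congr rfl fun i _ => ?_
      have hi : (i.1 : ℕ) < D - 1 := (Finset.mem_filter.mp i.2).2
      simp only [hF, dif_pos hi]
    have h2 : ∏ i ∈ T₂, F i = π ^ T₂.card := by
      rw [Finset.prod_congr rfl (fun i hi => ?_), Finset.prod_const]
      have hi : ¬ (i : ℕ) < D - 1 := (Finset.mem_filter.mp hi).2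
      simp only [hF, dif_neg hi]
    have hc2 : T₂.card ≤ k - 1 := by
      have hle := Finset.card_le_card_of_injOn (s := T₂) (t := Finset.range (k - 1))
        (fun i => (i : ℕ) - (D - 1))
        (fun a ha => by
          have h1 := (Finset.mem_filter.mp ha).2
          have h2 : (a : ℕ) < (D - 1) + (k - 1) := a.isLt
          simp only [Finset.mem_range, Finset.coe_range, Finset.mem_coe, Set.mem_Iio]
          omega)
        (fun a ha b hb hab => by
          have ha1 := (Finset.mem_filter.mp ha).2
          have hb1 := (Finset.mem_filter.mp hb).2
          simp only [Set.mem_setOf_eq] at hab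
          exact Fin.ext (by omega))
      simpa using hle
    rcases T₂.eq_empty_or_nonempty with h2e | h2ne
    · -- all chosen elements are units
      have hprod : ∏ i ∈ T, F i = (U : M) := by
        rw [hsplit, h1, h2e]; simp
      rw [hprod, ← Units.val_mul] at hidem
      have hUU : U * U = U := Units.ext hidem
      have hU1 : U = 1 := mul_eq_right.mp hUU
      have hinj : Function.Injective
          (fun i : {x // x ∈ T₁} => (⟨(i.1 : ℕ), (Finset.mem_filter.mp i.2).2⟩ : Fin (D - 1))) := by
        intro a b hab
        simp only [Fin.mk.injEq] at hab
        exact Subtype.ext (Fin.ext hab)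
      have hprod' : ∏ j ∈ T₁.attach.map ⟨_, hinj⟩, g j = U := by
        rw [Finset.prod_map, hU]
        rfl
      have hne : (T₁.attach.map ⟨_, hinj⟩).Nonempty := by
        obtain ⟨i, hi⟩ := hT
        have hi1 : i ∈ T₁ := by
          rcases lt_or_ge (i : ℕ) (D - 1) with h | h
          · exact Finset.mem_filter.mpr ⟨hi, h⟩
          · have hi2 : i ∈ T₂ := Finset.mem_filter.mpr ⟨hi, by omega⟩
            rw [h2e] at hi2
            exact (Finset.notMem_empty i hi2).elim
        exact ⟨_, Finset.mem_map.mpr ⟨⟨i, hi1⟩, Finset.mem_attach _ _, rfl⟩⟩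
      exact hg _ hne (hprod'.trans hU1)
    · -- some chosen element is a multiple of π
      have hc1 : 1 ≤ T₂.card := Finset.card_pos.mpr h2ne
      have hprod : ∏ i ∈ T, F i = (U : M) * π ^ T₂.card := by
        rw [hsplit, h1, h2]
      have hxne : ∏ i ∈ T, F i ≠ 0 := by
        rw [hprod]
        intro h0
        exact hπne T₂.card (by omega) ((Units.mul_right_eq_zero U).mp h0)
      have hxk : (∏ i ∈ T, F i) = (∏ i ∈ T, F i) ^ k := by
        have h := aux_idem_pow hidem (k - 1)
        rw [Nat.sub_add_cancel hk] at h
        exact h.symm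
      have hzero : (∏ i ∈ T, F i) ^ k = 0 := by
        rw [hprod, mul_pow, ← pow_mul, pow_eq_zero_of_le (Nat.le_mul_of_pos_left k hc1) hπ0,
          mul_zero]
      exact hxne (hxk.trans hzero)
  -- membership of D + (k-1) in SE (the upper bound)
  have hmem : D + (k - 1) ∈ SE := by
    refine ⟨by omega, fun f => ?_⟩
    by_cases h0 : ∃ i, f i = 0
    · obtain ⟨i, hi⟩ := h0
      exact ⟨{i}, Finset.singleton_nonempty i, by simp [hi]⟩
    push_neg at h0
    by_cases hB : k ≤ (Finset.univ.filter fun i => ¬ IsUnit (f i)).card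
    · obtain ⟨T, hTsub, hTcard⟩ := Finset.exists_subset_card_eq hB
      have hTne : T.Nonempty := by rw [← Finset.card_pos, hTcard]; omega
      have hdvd : π ^ k ∣ ∏ i ∈ T, f i := by
        have h := Finset.prod_dvd_prod_of_dvd (fun _ => π) f
          (fun i hi => hπdvd (f i) ((Finset.mem_filter.mp (hTsub hi)).2))
        rwa [Finset.prod_const, hTcard] at h
      have hzz : ∏ i ∈ T, f i = 0 := by
        rw [hπ0] at hdvd
        exact zero_dvd_iff.mp hdvd
      exact ⟨T, hTne, by rw [hzz, mul_zero]⟩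
    · push_neg at hB
      have hAcard : D ≤ (Finset.univ.filter fun i => IsUnit (f i)).card := by
        have hsum := Finset.card_filter_add_card_filter_not
          (s := (Finset.univ : Finset (Fin (D + (k - 1))))) (p := fun i => IsUnit (f i))
        rw [Finset.card_univ, Fintype.card_fin] at hsum
        omega
      obtain ⟨A, hAsub, hAcD⟩ := Finset.exists_subset_card_eq hAcard
      set e := A.orderIsoOfFin hAcD with he
      have hunit : ∀ j : Fin D, IsUnit (f ((e j : {x // x ∈ A}) : Fin (D + (k - 1)))) := by
        intro j
        exact (Finset.mem_filter.mp (hAsub (e j).2)).2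
      set gD : Fin D → G := fun j => (hunit j).unit with hgD
      obtain ⟨T, hTne, hT1⟩ := hDmem.2 gD
      have hinj : Function.Injective
          (fun j : Fin D => ((e j : {x // x ∈ A}) : Fin (D + (k - 1)))) := by
        intro a b hab
        exact e.injective (Subtype.ext hab)
      refine ⟨T.map ⟨_, hinj⟩, Finset.map_nonempty.mpr hTne, ?_⟩
      have hcoe : ∏ i ∈ T.map ⟨_, hinj⟩, f i = ((∏ j ∈ T, gD j : G) : M) := by
        rw [Finset.prod_map]
        rw [show ((∏ j ∈ T, gD j : G) : M) = ∏ j ∈ T, ((gD j : G) : M) from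
          map_prod (Units.coeHom M) _ _]
        refine Finset.prod_congr rfl fun j _ => ?_
        simp only [Function.Embedding.coeFn_mk, hgD]
        exact ((hunit j).unit_spec).symm
      rw [hcoe, hT1, Units.val_one, mul_one]
  -- conclusion
  rw [hEsInf]
  refine le_antisymm (Nat.sInf_le hmem) ?_
  refine le_csInf ⟨_, hmem⟩ fun t ht => ?_
  by_contra hlt
  push_neg at hlt
  have htle : t ≤ (D - 1) + (k - 1) := by omega
  obtain ⟨T, hTne, hTidem⟩ := ht.2 (fun i => F (Fin.castLE htle i))
  have hb := hFbad (T.map (Fin.castLEEmb htle)) (Finset.map_nonempty.mpr hTne)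
  rw [Finset.prod_map] at hb
  exact hb hTidem
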